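/- For all reals α, β > 0, c > 0 and d with |d| < c, one has ∫₀^∞ u^{β−1} e^{−c·u} ₁F₁(α; 1; d·u) du = Γ(β) · c^{−β} · ₂F₁(α, β; 1; d/c). -/

import Mathlib

open Real MeasureTheory

/-- Rising factorial (Pochhammer symbol) `(a)_k` for a real `a`. -/
noncomputable def risingFactorial (a : ℝ) (k : ℕ) : ℝ :=
  ∏ i ∈ Finset.range k, (a + i)

/-- The Kummer confluent hypergeometric function `₁F₁(a; 1; z)`. -/
noncomputable def kummer1F1 (a z : ℝ) : ℝ :=
  ∑' k : ℕ, risingFactorial a k / (Nat.factorial k : ℝ) ^ 2 * z ^ k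

/-- The Gauss hypergeometric function `₂F₁(a, b; 1; z)`. -/
noncomputable def gauss2F1 (a b z : ℝ) : ℝ :=
  ∑' k : ℕ, risingFactorial a k * risingFactorial b k / (Nat.factorial k : ℝ) ^ 2 * z ^ k

lemma rf_pos {a : ℝ} (ha : 0 < a) (k : ℕ) : 0 < risingFactorial a k := by
  refine Finset.prod_pos fun i _ => by positivity

lemma rf_succ (a : ℝ) (k : ℕ) :
    risingFactorial a (k + 1) = risingFactorial a k * (a + k) :=
  Finset.prod_range_succ _ _

lemma Gamma_add_nat {b : ℝ} (hb : 0 < b) (k : ℕ) :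
    Real.Gamma (b + k) = Real.Gamma b * risingFactorial b k := by
  induction k with
  | zero => simp [risingFactorial]
  | succ n ih =>
    have h : b + (n + 1 : ℕ) = (b + n) + 1 := by push_cast; ring
    rw [h, Real.Gamma_add_one (by positivity), ih, rf_succ]
    ring

lemma intOn {s r : ℝ} (hs : 0 < s) (hr : 0 < r) :
    IntegrableOn (fun u : ℝ => u ^ (s - 1) * Real.exp (-(r * u))) (Set.Ioi 0) := by
  have h : IntegrableOn (fun u : ℝ => Real.exp (-(r * u)) * (r * u) ^ (s - 1))
      (Set.Ioi 0) := by
    have := (integrableOn_Ioi_comp_mul_left_iff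
      (fun x : ℝ => Real.exp (-x) * x ^ (s - 1)) 0 hr).2
      (by simpa using Real.GammaIntegral_convergent hs)
    simpa using this
  have h2 : IntegrableOn
      (fun u : ℝ => (r ^ (s - 1))⁻¹ * (Real.exp (-(r * u)) * (r * u) ^ (s - 1)))
      (Set.Ioi 0) := h.const_mul _
  refine IntegrableOn.congr_fun h2 (fun u hu => ?_) measurableSet_Ioi
  have hu : (0:ℝ) < u := hu
  rw [Real.mul_rpow hr.le hu.le]
  field_simp [(Real.rpow_pos_of_pos hr (s-1)).ne']

lemma ratio_tendsto (a b : ℝ) :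
    Filter.Tendsto (fun k : ℕ => (a + k) * (b + k) / ((k : ℝ) + 1) ^ 2)
      Filter.atTop (nhds 1) := by
  have h1 : ∀ x : ℝ, Filter.Tendsto (fun k : ℕ => (x + k) / ((k : ℝ) + 1))
      Filter.atTop (nhds 1) := by
    intro x
    have : ∀ k : ℕ, (x + k) / ((k : ℝ) + 1) = (x - 1) / ((k : ℝ) + 1) + 1 := by
      intro k
      have : ((k : ℝ) + 1) ≠ 0 := by positivity
      field_simp
      ring
    simp_rw [this]
    have h0 : Filter.Tendsto (fun k : ℕ => (x - 1) / ((k : ℝ) + 1))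
        Filter.atTop (nhds 0) :=
      Filter.Tendsto.div_atTop tendsto_const_nhds
        (Filter.tendsto_atTop_add_const_right _ 1 tendsto_natCast_atTop_atTop)
    simpa using h0.add tendsto_const_nhds
  have := (h1 a).mul (h1 b)
  simp only [one_mul] at this
  refine this.congr fun k => ?_
  rw [div_mul_div_comm]
  ring_nf

lemma summable_hyper {a b x : ℝ} (ha : 0 < a) (hb : 0 < b) (hx : |x| < 1) :
    Summable (fun k : ℕ =>
      risingFactorial a k * risingFactorial b k / (Nat.factorial k : ℝ) ^ 2 * x ^ k) := by
  rcases eq_or_ne x 0 with rfl | hx0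
  · refine summable_of_ne_finset_zero (s := {0}) fun k hk => ?_
    have : k ≠ 0 := by simpa using hk
    simp [zero_pow this]
  · set f : ℕ → ℝ := fun k =>
      risingFactorial a k * risingFactorial b k / (Nat.factorial k : ℝ) ^ 2 * x ^ k
    have hfne : ∀ k, f k ≠ 0 := by
      intro k
      have h1 := rf_pos ha k
      have h2 := rf_pos hb k
      have h3 : (Nat.factorial k : ℝ) > 0 := by positivity
      have h4 : x ^ k ≠ 0 := pow_ne_zero _ hx0
      simp only [f]
      positivity
    refine summable_of_ratio_test_tendsto_lt_one hx (Filter.Eventually.of_forall hfne) ?_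
    have key : ∀ k : ℕ, ‖f (k + 1)‖ / ‖f k‖ =
        (a + k) * (b + k) / ((k : ℝ) + 1) ^ 2 * |x| := by
      intro k
      have h1 := rf_pos ha k
      have h2 := rf_pos hb k
      have h3 : (0:ℝ) < Nat.factorial k := by positivity
      have hfk : ‖f k‖ = risingFactorial a k * risingFactorial b k /
          (Nat.factorial k : ℝ) ^ 2 * |x| ^ k := by
        simp only [f, Real.norm_eq_abs, abs_mul, abs_div, abs_pow, abs_of_pos h1,
          abs_of_pos h2, abs_of_pos h3, abs_mul]
      have hfk1 : ‖f (k+1)‖ = risingFactorial a k * (a + k) * (risingFactorial b k * (b + k)) /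
          ((Nat.factorial k : ℝ) * (k + 1)) ^ 2 * (|x| ^ k * |x|) := by
        have h1' := rf_pos ha (k+1)
        have h2' := rf_pos hb (k+1)
        have h3' : (0:ℝ) < Nat.factorial (k+1) := by positivity
        simp only [f, Real.norm_eq_abs, abs_mul, abs_div, abs_pow, abs_of_pos h1',
          abs_of_pos h2', abs_of_pos h3']
        rw [rf_succ, rf_succ, pow_succ, Nat.factorial_succ]
        push_cast
        ring
      rw [hfk, hfk1]
      have hxk : (0:ℝ) < |x| ^ k := pow_pos (abs_pos.mpr hx0) k
      field_simp
    simp_rw [key]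
    have := (ratio_tendsto a b).mul_const |x|
    simpa using this

theorem stmt_7 (α β c d : ℝ) (hα : 0 < α) (hβ : 0 < β) (hc : 0 < c) (hd : |d| < c) :
    ∫ u in Set.Ioi (0 : ℝ), u ^ (β - 1) * Real.exp (-(c * u)) * kummer1F1 α (d * u) =
      Real.Gamma β * c ^ (-β) * gauss2F1 α β (d / c) := by
  have hβk : ∀ k : ℕ, (0:ℝ) < β + k := fun k => by positivity
  set F : ℕ → ℝ → ℝ := fun k u =>
    u ^ (β - 1) * Real.exp (-(c * u)) *
      (risingFactorial α k / (Nat.factorial k : ℝ) ^ 2 * (d * u) ^ k) with hF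
  have hFeq : ∀ k : ℕ, Set.EqOn
      (fun u : ℝ => (risingFactorial α k / (Nat.factorial k : ℝ) ^ 2 * d ^ k) *
        (u ^ (β + k - 1) * Real.exp (-(c * u)))) (F k) (Set.Ioi 0) := by
    intro k u hu
    have hu : (0:ℝ) < u := hu
    simp only [F]
    rw [mul_pow, show β + (k:ℝ) - 1 = (β - 1) + (k:ℝ) by ring, Real.rpow_add hu,
      Real.rpow_natCast]
    ring
  have hint : ∀ k : ℕ, IntegrableOn (F k) (Set.Ioi 0) := fun k =>
    IntegrableOn.congr_fun ((intOn (hβk k) hc).const_mul _) (hFeq k) measurableSet_Ioi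
  have key : ∀ (e : ℝ) (k : ℕ),
      (risingFactorial α k / (Nat.factorial k : ℝ) ^ 2 * e ^ k) *
        ((1/c) ^ (β + k) * Real.Gamma (β + k)) =
      (Real.Gamma β * (1/c) ^ (β : ℝ)) *
        (risingFactorial α k * risingFactorial β k / (Nat.factorial k : ℝ) ^ 2 * (e/c) ^ k) := by
    intro e k
    have hpow : (e/c) ^ k = e ^ k * (1/c) ^ k := by
      rw [div_pow, one_div, inv_pow, div_eq_mul_inv]
    rw [Gamma_add_nat hβ k, Real.rpow_add (by positivity : (0:ℝ) < 1/c),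
      Real.rpow_natCast, hpow]
    ring
  have hval : ∀ k : ℕ, (∫ u in Set.Ioi (0:ℝ), F k u) =
      (risingFactorial α k / (Nat.factorial k : ℝ) ^ 2 * d ^ k) *
        ((1/c) ^ (β + k) * Real.Gamma (β + k)) := by
    intro k
    rw [← setIntegral_congr_fun measurableSet_Ioi (hFeq k), integral_const_mul,
      integral_rpow_mul_exp_neg_mul_Ioi (hβk k) hc]
  have hnormval : ∀ k : ℕ, (∫ u in Set.Ioi (0:ℝ), ‖F k u‖) =
      (risingFactorial α k / (Nat.factorial k : ℝ) ^ 2 * |d| ^ k) *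
        ((1/c) ^ (β + k) * Real.Gamma (β + k)) := by
    intro k
    have heq : Set.EqOn
        (fun u : ℝ => (risingFactorial α k / (Nat.factorial k : ℝ) ^ 2 * |d| ^ k) *
          (u ^ (β + k - 1) * Real.exp (-(c * u)))) (fun u => ‖F k u‖) (Set.Ioi 0) := by
      intro u hu
      have hu : (0:ℝ) < u := hu
      have h1 : 0 ≤ u ^ (β + k - 1) * Real.exp (-(c * u)) := by positivity
      dsimp only
      rw [Real.norm_eq_abs, ← hFeq k hu]
      simp only [abs_mul, abs_div, abs_pow, abs_of_nonneg h1,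
        abs_of_pos (rf_pos hα k), Nat.abs_cast]
    rw [← setIntegral_congr_fun measurableSet_Ioi heq, integral_const_mul,
      integral_rpow_mul_exp_neg_mul_Ioi (hβk k) hc]
  have hx : |(|d|/c)| < 1 := by
    rw [abs_of_nonneg (by positivity), div_lt_one hc]
    exact hd
  have hsum : Summable fun k : ℕ => ∫ u in Set.Ioi (0:ℝ), ‖F k u‖ := by
    refine ((summable_hyper hα hβ hx).mul_left
      (Real.Gamma β * (1/c) ^ (β : ℝ))).congr fun k => ?_
    rw [hnormval k, key |d| k]
  have step1 : (∫ u in Set.Ioi (0 : ℝ),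
      u ^ (β - 1) * Real.exp (-(c * u)) * kummer1F1 α (d * u)) =
      ∫ u in Set.Ioi (0:ℝ), ∑' k : ℕ, F k u := by
    refine setIntegral_congr_fun measurableSet_Ioi fun u _ => ?_
    simp only [kummer1F1, F]
    rw [← tsum_mul_left]
  have hcb : ((1:ℝ)/c) ^ (β : ℝ) = c ^ (-β) := by
    rw [one_div, Real.inv_rpow hc.le, ← Real.rpow_neg hc.le]
  rw [step1, ← MeasureTheory.integral_tsum_of_summable_integral_norm hint hsum,
    gauss2F1, ← tsum_mul_left]
  refine tsum_congr fun k => ?_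
  rw [hval k, key d k, hcb]
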